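/- If an infinite SL-structure (U, s, h) satisfies a closed prenex formula φ with m quantifiers whose matrix is a boolean combination of domain-independent test formulae, then the restriction of the universe to any finite subset U' ⊇ elem(h) containing at least m additional locations outside elem(h) yields a finite model (U', s, h) of φ. -/

import Mathlib

def hDom {L : Type} {k : ℕ} (h : L → Option (Fin k → L)) : Set L := {l | h l ≠ none}
def hImg {L : Type} {k : ℕ} (h : L → Option (Fin k → L)) : Set L :=
  {l | ∃ l' v, h l' = some v ∧ ∃ i, v i = l}
def hElem {L : Type} {k : ℕ} (h : L → Option (Fin k → L)) : Set L := hDom h ∪ hImg h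

inductive TFk (k : ℕ) where
  | eq (x y : ℕ)
  | pto (x : ℕ) (ys : Fin k → ℕ)
  | alloc (x : ℕ)
  | hge (n : ℕ)

inductive BCk (k : ℕ) where
  | atom (a : TFk k)
  | top
  | neg (φ : BCk k)
  | conj (φ ψ : BCk k)

def tfkSat {L : Type} {k : ℕ} (s : ℕ → L) (h : L → Option (Fin k → L)) : TFk k → Prop
  | .eq x y => s x = s y
  | .pto x ys => h (s x) = some (fun i => s (ys i))
  | .alloc x => s x ∈ hDom h
  | .hge n => n ≤ (hDom h).ncard

def bckSat {L : Type} {k : ℕ} (s : ℕ → L) (h : L → Option (Fin k → L)) : BCk k → Prop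
  | .atom a => tfkSat s h a
  | .top => True
  | .neg φ => ¬ bckSat s h φ
  | .conj φ ψ => bckSat s h φ ∧ bckSat s h ψ

def prSat {L : Type} {k : ℕ} (U : Set L) (h : L → Option (Fin k → L)) :
    List (Bool × ℕ) → (ℕ → L) → BCk k → Prop
  | [], s, φ => bckSat s h φ
  | (b, x) :: Q, s, φ =>
      if b then ∀ e ∈ U, prSat U h Q (Function.update s x e) φ
      else ∃ e ∈ U, prSat U h Q (Function.update s x e) φ

def tfkVars {k : ℕ} : TFk k → Set ℕ
  | .eq x y => {x, y}
  | .pto x ys => {x} ∪ Set.range ys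
  | .alloc x => {x}
  | .hge _ => ∅

def bckVars {k : ℕ} : BCk k → Set ℕ
  | .atom a => tfkVars a
  | .top => ∅
  | .neg φ => bckVars φ
  | .conj φ ψ => bckVars φ ∪ bckVars ψ

lemma hImg_finite {L : Type} {k : ℕ} {h : L → Option (Fin k → L)}
    (hfin : (hDom h).Finite) : (hImg h).Finite := by
  have hsub : hImg h ⊆ ⋃ l ∈ hDom h, ((h l).elim ∅ Set.range) := by
    rintro x ⟨l', v, hv, i, hi⟩
    refine Set.mem_biUnion (show l' ∈ hDom h from by simp [hDom, hv]) ?_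
    simp only [hv, Option.elim]
    exact ⟨i, hi⟩
  exact (hfin.biUnion (fun l _ => by cases h l <;> simp [Set.finite_range])).subset hsub

def SEquiv {L : Type} {k : ℕ} (h : L → Option (Fin k → L)) (W : Set ℕ) (s s' : ℕ → L) : Prop :=
  (∀ x ∈ W, ∀ y ∈ W, (s x = s y ↔ s' x = s' y)) ∧
  (∀ x ∈ W, (s x ∈ hElem h → s' x = s x) ∧ (s' x ∈ hElem h → s x = s' x))

lemma SEquiv.symm' {L : Type} {k : ℕ} {h : L → Option (Fin k → L)} {W s s'}
    (e : SEquiv h W s s') : SEquiv h W s' s :=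
  ⟨fun x hx y hy => (e.1 x hx y hy).symm, fun x hx => ⟨(e.2 x hx).2, (e.2 x hx).1⟩⟩

lemma h_apply_eq {L : Type} {k : ℕ} {h : L → Option (Fin k → L)} {W s s'}
    (e : SEquiv h W s s') {x : ℕ} (hx : x ∈ W) : h (s x) = h (s' x) := by
  by_cases hd : s x ∈ hDom h
  · rw [(e.2 x hx).1 (Set.mem_union_left _ hd)]
  · by_cases hd' : s' x ∈ hDom h
    · rw [(e.2 x hx).2 (Set.mem_union_left _ hd')]
    · simp only [hDom, Set.mem_setOf_eq, not_not] at hd hd'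
      rw [hd, hd']

lemma tfk_fwd {L : Type} {k : ℕ} {h : L → Option (Fin k → L)} {W s s'}
    (e : SEquiv h W s s') (a : TFk k) (hv : tfkVars a ⊆ W) :
    tfkSat s h a → tfkSat s' h a := by
  cases a with
  | eq x y =>
      have hx : x ∈ W := hv (by simp [tfkVars])
      have hy : y ∈ W := hv (by simp [tfkVars])
      exact fun hs => (e.1 x hx y hy).1 hs
  | pto x ys =>
      intro hs
      have hx : x ∈ W := hv (by simp [tfkVars])
      have hys : ∀ i, ys i ∈ W := fun i => hv (by
        simp only [tfkVars, Set.mem_union, Set.mem_singleton_iff, Set.mem_range]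
        exact Or.inr ⟨i, rfl⟩)
      show h (s' x) = some (fun i => s' (ys i))
      rw [← h_apply_eq e hx, hs]
      congr 1
      funext i
      have hmem : s (ys i) ∈ hElem h :=
        Set.mem_union_right _ ⟨s x, fun j => s (ys j), hs, i, rfl⟩
      exact ((e.2 (ys i) (hys i)).1 hmem).symm
  | alloc x =>
      have hx : x ∈ W := hv (by simp [tfkVars])
      intro hs
      show s' x ∈ hDom h
      simp only [hDom, Set.mem_setOf_eq] at hs ⊢
      rwa [← h_apply_eq e hx]
  | hge n => exact id

lemma bck_iff {L : Type} {k : ℕ} {h : L → Option (Fin k → L)} {W s s'}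
    (e : SEquiv h W s s') (φ : BCk k) (hv : bckVars φ ⊆ W) :
    bckSat s h φ ↔ bckSat s' h φ := by
  induction φ with
  | atom a => exact ⟨tfk_fwd e a hv, tfk_fwd e.symm' a hv⟩
  | top => rfl
  | neg ψ ih => exact not_congr (ih hv)
  | conj ψ χ ih1 ih2 =>
      exact and_congr (ih1 (fun x hx => hv (Or.inl hx))) (ih2 (fun x hx => hv (Or.inr hx)))

lemma SEquiv.update' {L : Type} {k : ℕ} {h : L → Option (Fin k → L)} {W s s'}
    (e : SEquiv h W s s') (q : ℕ) {ev ev' : L}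
    (hpat : ∀ x ∈ W, (s x = ev ↔ s' x = ev'))
    (hel1 : ev ∈ hElem h → ev' = ev) (hel2 : ev' ∈ hElem h → ev = ev') :
    SEquiv h (insert q W) (Function.update s q ev) (Function.update s' q ev') := by
  constructor
  · intro x hx y hy
    by_cases hxq : x = q <;> by_cases hyq : y = q
    · subst hxq; subst hyq; simp
    · subst hxq
      have hy' : y ∈ W := hy.resolve_left hyq
      simp only [Function.update_self, Function.update_of_ne hyq]
      rw [eq_comm, eq_comm (a := ev'), hpat y hy']
    · subst hyq
      have hx' : x ∈ W := hx.resolve_left hxq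
      simp only [Function.update_self, Function.update_of_ne hxq]
      exact hpat x hx'
    · have hx' : x ∈ W := hx.resolve_left hxq
      have hy' : y ∈ W := hy.resolve_left hyq
      simp only [Function.update_of_ne hxq, Function.update_of_ne hyq]
      exact e.1 x hx' y hy'
  · intro x hx
    by_cases hxq : x = q
    · subst hxq; simpa using ⟨hel1, hel2⟩
    · have hx' : x ∈ W := hx.resolve_left hxq
      simp only [Function.update_of_ne hxq]
      exact e.2 x hx'

lemma prSat_transfer {L : Type} {k : ℕ} {U U' : Set L} {h : L → Option (Fin k → L)}
    (hinf : U.Infinite) (hef : (hElem h).Finite)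
    (hU'sub : U' ⊆ U) (hU'elem : hElem h ⊆ U') (hU'fin : U'.Finite) (φ : BCk k) :
    ∀ (Q : List (Bool × ℕ)) (W : Set ℕ) (s s' : ℕ → L) (A : Set L),
      W.Finite → SEquiv h W s s' →
      bckVars φ ⊆ W ∪ {x | ∃ b, (b, x) ∈ Q} →
      A ⊆ U' \ hElem h → Q.length ≤ A.ncard →
      (∀ x ∈ W, s' x ∉ A) → (∀ x ∈ W, s' x ∈ U') → (∀ x, s x ∈ U) →
      prSat U h Q s φ → prSat U' h Q s' φ := by
  intro Q
  induction Q with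
  | nil =>
      intro W s s' A hWfin heq hvars _ _ _ _ _ hsat
      have hv : bckVars φ ⊆ W := by
        intro x hx
        rcases hvars hx with hW | ⟨b, hb⟩
        · exact hW
        · simp at hb
      exact (bck_iff heq φ hv).mp hsat
  | cons p Q ih =>
      obtain ⟨b, q⟩ := p
      intro W s s' A hWfin heq hvars hAsub hlen hnotA hinU' hsU hsat
      have key : ∀ e e', e ∈ U → e' ∈ U' →
          (∀ x ∈ W, (s x = e ↔ s' x = e')) →
          (e ∈ hElem h → e' = e) → (e' ∈ hElem h → e = e') →
          prSat U h Q (Function.update s q e) φ →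
          prSat U' h Q (Function.update s' q e') φ := by
        intro e e' heU he'U' hpat hel1 hel2 hsat'
        refine ih (insert q W) (Function.update s q e) (Function.update s' q e')
          (A \ {e'}) (hWfin.insert q) (heq.update' q hpat hel1 hel2) ?_ ?_ ?_ ?_ ?_ ?_ hsat'
        · intro x hx
          rcases hvars hx with hW | ⟨b', hb'⟩
          · exact Or.inl (Set.mem_insert_of_mem _ hW)
          · rcases List.mem_cons.mp hb' with heqp | hmem
            · have : x = q := (Prod.mk.injEq _ _ _ _ ▸ heqp).2
              exact Or.inl (this ▸ Set.mem_insert _ _)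
            · exact Or.inr ⟨b', hmem⟩
        · exact (Set.diff_subset).trans hAsub
        · have hAfin : A.Finite := hU'fin.subset (hAsub.trans Set.diff_subset)
          have h1 : A.ncard ≤ (A \ {e'}).ncard + 1 := by
            calc A.ncard ≤ (insert e' (A \ {e'})).ncard :=
                  Set.ncard_le_ncard (fun a ha => by
                    by_cases hae : a = e'
                    · exact hae ▸ Set.mem_insert _ _
                    · exact Set.mem_insert_of_mem _ ⟨ha, hae⟩)
                    ((hAfin.diff).insert e')
              _ ≤ (A \ {e'}).ncard + 1 := Set.ncard_insert_le _ _
          simp only [List.length_cons] at hlen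
          omega
        · intro x hx
          by_cases hxq : x = q
          · subst hxq; simp [Function.update_self]
          · simp only [Function.update_of_ne hxq]
            exact fun hmem => hnotA x (hx.resolve_left hxq) hmem.1
        · intro x hx
          by_cases hxq : x = q
          · subst hxq; simpa using he'U'
          · simp only [Function.update_of_ne hxq]
            exact hinU' x (hx.resolve_left hxq)
        · intro x
          by_cases hxq : x = q
          · subst hxq; simpa using heU
          · simp only [Function.update_of_ne hxq]; exact hsU x
      cases b with
      | true =>
          simp only [prSat, if_true] at hsat ⊢
          intro e' he'U'
          by_cases h1 : e' ∈ hElem h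
          · refine key e' e' (hU'sub he'U') he'U' ?_ (fun _ => rfl) (fun _ => rfl)
              (hsat e' (hU'sub he'U'))
            intro x hx
            constructor
            · intro hse; exact hse ▸ (heq.2 x hx).1 (hse ▸ h1)
            · intro hse; exact hse ▸ (heq.2 x hx).2 (hse ▸ h1)
          · by_cases h2 : ∃ x₀ ∈ W, s' x₀ = e'
            · obtain ⟨x₀, hx₀, hx₀e⟩ := h2
              refine key (s x₀) e' (hsU x₀) he'U' ?_ ?_ ?_ (hsat _ (hsU x₀))
              · intro x hx
                rw [← hx₀e]; exact heq.1 x hx x₀ hx₀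
              · intro hmem
                rw [← hx₀e]; exact (heq.2 x₀ hx₀).1 hmem
              · intro hmem; exact absurd hmem h1
            · push_neg at h2
              obtain ⟨e, heUd⟩ := (hinf.diff ((hef.union (hWfin.image s)))).nonempty
              have heU : e ∈ U := heUd.1
              have heNel : e ∉ hElem h := fun hm => heUd.2 (Or.inl hm)
              have heNim : ∀ x ∈ W, s x ≠ e := fun x hx hse =>
                heUd.2 (Or.inr ⟨x, hx, hse⟩)
              refine key e e' heU he'U' ?_ (fun hm => absurd hm heNel)
                (fun hm => absurd hm h1) (hsat e heU)
              intro x hx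
              constructor
              · intro hse; exact absurd hse (heNim x hx)
              · intro hse; exact absurd hse (h2 x hx)
      | false =>
          simp only [prSat, if_false] at hsat ⊢
          obtain ⟨e, heU, hsat'⟩ := hsat
          by_cases h1 : e ∈ hElem h
          · refine ⟨e, hU'elem h1, key e e heU (hU'elem h1) ?_ (fun _ => rfl)
              (fun _ => rfl) hsat'⟩
            intro x hx
            constructor
            · intro hse; exact hse ▸ (heq.2 x hx).1 (hse ▸ h1)
            · intro hse; exact hse ▸ (heq.2 x hx).2 (hse ▸ h1)
          · by_cases h2 : ∃ x₀ ∈ W, s x₀ = e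
            · obtain ⟨x₀, hx₀, hx₀e⟩ := h2
              refine ⟨s' x₀, hinU' x₀ hx₀, key e (s' x₀) heU (hinU' x₀ hx₀) ?_ ?_ ?_ hsat'⟩
              · intro x hx
                rw [← hx₀e]; exact heq.1 x hx x₀ hx₀
              · intro hmem
                rw [← hx₀e] at hmem ⊢
                exact (heq.2 x₀ hx₀).1 hmem
              · intro hmem
                have := (heq.2 x₀ hx₀).2 hmem
                rw [← hx₀e, this]
            · push_neg at h2
              have hAfin : A.Finite := hU'fin.subset (hAsub.trans Set.diff_subset)
              have hApos : A.Nonempty := by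
                rw [Set.nonempty_iff_ne_empty]
                intro hAe
                rw [hAe, Set.ncard_empty] at hlen
                simp at hlen
              obtain ⟨e', he'A⟩ := hApos
              have he'd := hAsub he'A
              refine ⟨e', he'd.1, key e e' heU he'd.1 ?_
                (fun hm => absurd hm h1) (fun hm => absurd hm he'd.2) hsat'⟩
              intro x hx
              constructor
              · intro hse; exact absurd hse (h2 x hx)
              · intro hse; exact absurd (hse ▸ he'A) (hnotA x hx)

/-- restricting the universe of an infinite model of a closed prenex
formula (matrix over domain-independent test formulae) to a finite subset
U' ⊇ elem(h) with at least m extra locations outside elem(h) yields a finite model. -/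
theorem infinite_model_restriction {L : Type} {k : ℕ}
    (Q : List (Bool × ℕ)) (φ : BCk k)
    (hclosed : bckVars φ ⊆ {x | ∃ b, (b, x) ∈ Q})
    (U : Set L) (s : ℕ → L) (h : L → Option (Fin k → L))
    (hinf : U.Infinite) (hfin : (hDom h).Finite) (hwf : hElem h ⊆ U)
    (hsU : ∀ x, s x ∈ U)
    (hsat : prSat U h Q s φ)
    (U' : Set L) (hU'fin : U'.Finite) (hU'sub : U' ⊆ U)
    (hU'elem : hElem h ⊆ U')
    (hslack : Q.length ≤ (U' \ hElem h).ncard) :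
    prSat U' h Q s φ := by
  have hef : (hElem h).Finite := hfin.union (hImg_finite hfin)
  exact prSat_transfer hinf hef hU'sub hU'elem hU'fin φ Q ∅ s s (U' \ hElem h)
    Set.finite_empty ⟨fun x hx => absurd hx (Set.notMem_empty x),
      fun x hx => absurd hx (Set.notMem_empty x)⟩
    (fun x hx => Or.inr (hclosed hx)) le_rfl hslack
    (fun x hx => absurd hx (Set.notMem_empty x))
    (fun x hx => absurd hx (Set.notMem_empty x)) hsU hsat
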